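/- arXiv:1710.04186 — 5 statements merged into one kernel-verified Lean document; each statement's English description precedes it below -/
import Mathlib

section
/- Let A be an integral domain, F a field, and σ₁,…,σₙ pairwise distinct injective ring homomorphisms from A to F. Then there exist elements a₁,…,aₙ ∈ A such that the n×n matrix with (i,j)-entry σⱼ(aᵢ) has nonzero determinant. -/
/-- Dedekind-type lemma: given pairwise distinct injective ring homomorphisms
`σ₁, …, σₙ : A → F` from an integral domain to a field, there exist `a₁, …, aₙ ∈ A`
such that the matrix `(σⱼ(aᵢ))` has nonzero determinant. -/
theorem stmt0 {A F : Type*} [CommRing A] [IsDomain A] [Field F]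
    (n : ℕ) (σ : Fin n → (A →+* F))
    (hinj : ∀ i, Function.Injective (σ i))
    (hdist : ∀ i j, i ≠ j → σ i ≠ σ j) :
    ∃ a : Fin n → A, (Matrix.of fun i j => σ j (a i)).det ≠ 0 := by
  classical
  -- Dedekind independence of characters
  have hLI : LinearIndependent F (fun i : Fin n => ((σ i : A →* F) : A → F)) := by
    apply (linearIndependent_monoidHom A F).comp (fun i => (σ i : A →* F))
    intro i j hij
    by_contra hne
    exact hdist i j hne (RingHom.ext fun a => by
      have := congrArg (fun f : A →* F => f a) hij; simpa using this)
  set e : A → (Fin n → F) := fun a j => σ j a with he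
  have hspan : Submodule.span F (Set.range e) = ⊤ := by
    by_contra hne
    obtain ⟨f, hf0, hf⟩ := Submodule.exists_dual_map_eq_bot_of_lt_top
      (lt_top_iff_ne_top.mpr hne) inferInstance
    set c : Fin n → F := fun j => f (Pi.single j 1) with hc
    have key : ∀ a : A, ∑ j, c j * σ j a = 0 := by
      intro a
      have hmem : e a ∈ Submodule.span F (Set.range e) :=
        Submodule.subset_span ⟨a, rfl⟩
      have : f (e a) = 0 := by
        have := hf ▸ Submodule.mem_map_of_mem (f := f) hmem
        exact (Submodule.mem_bot F).mp this
      have hea : e a = ∑ j, (σ j a) • (Pi.single j 1 : Fin n → F) := by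
        ext k; simp [he, Pi.single_apply, mul_comm]
      rw [hea, map_sum] at this
      simpa [mul_comm, smul_eq_mul] using this
    have : ∀ j, c j = 0 := by
      have := Fintype.linearIndependent_iff.mp hLI c ?_
      · exact this
      · funext a
        simpa [smul_eq_mul] using key a
    apply hf0
    apply LinearMap.ext; intro v
    have hv : v = ∑ j, v j • (Pi.single j 1 : Fin n → F) := by
      ext k; simp [Pi.single_apply, mul_comm]
    rw [hv, map_sum]
    exact Finset.sum_eq_zero fun x _ => by
      rw [map_smul, show f (Pi.single x 1) = 0 from this x, smul_zero]
  obtain ⟨b, hbsub, hbspan, hbli⟩ := exists_linearIndependent F (Set.range e)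
  rw [hspan] at hbspan
  have hfin : b.Finite := hbli.finite
  have hft : Fintype b := hfin.fintype
  let B : Module.Basis b F (Fin n → F) := Module.Basis.mk hbli (by rw [Subtype.range_coe, hbspan])
  have hcard : Fintype.card b = n := by
    have := Module.finrank_eq_card_basis B
    simpa [Module.finrank_pi] using this.symm
  let g : Fin n ≃ b := (Fintype.equivFinOfCardEq hcard).symm
  have hpre : ∀ i : Fin n, ∃ a : A, e a = (g i : Fin n → F) := fun i => hbsub (g i).2
  choose a ha using hpre
  refine ⟨a, ?_⟩
  have hrows : LinearIndependent F (fun i => (Matrix.of fun i j => σ j (a i)) i) := by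
    have : (fun i => (Matrix.of fun i j => σ j (a i)) i) = (fun x : b => (x : Fin n → F)) ∘ g := by
      funext i; exact ha i
    rw [this]
    exact hbli.comp g g.injective
  have := Matrix.linearIndependent_rows_iff_isUnit.mp hrows
  exact ((Matrix.isUnit_iff_isUnit_det _).mp this).ne_zero
end

section
/- Let L/K be a finite Galois extension with group G, and let μ be an automorphism of L normalizing the setup such that ℳℳ⁻¹ ∩ G = {1} (separation). Then K·μ(K), the subfield of L generated by K and μ(K), equals L^{G_μ}, where G_μ = {g ∈ G : gμg⁻¹ = μ}. -/
/-- Let `G` be a finite subgroup and `ℳ` a submonoid of the automorphism group of a field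
`L`, with `ℳ` closed under `G`-conjugation and satisfying the separation condition
`ℳℳ⁻¹ ∩ G = 1`.  Let `K = L^G`.  Then for `μ ∈ ℳ`, the subfield of `L` generated by
`K` and `μ(K)` equals the fixed field `L^{G_μ}` of `G_μ = {g ∈ G : gμg⁻¹ = μ}`. -/
theorem stmt10 (L : Type*) [Field L] (G : Subgroup (RingAut L))
    (hGfin : (G : Set (RingAut L)).Finite)
    (M : Submonoid (RingAut L))
    (hsep : ∀ μ₁ ∈ M, ∀ μ₂ ∈ M, μ₁ * μ₂⁻¹ ∈ G → μ₁ = μ₂)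
    (hinv : ∀ g ∈ G, ∀ ν ∈ M, g * ν * g⁻¹ ∈ M)
    (μ : RingAut L) (hμ : μ ∈ M) :
    {x : L | ∀ g ∈ G, g * μ * g⁻¹ = μ → g x = x}
      = ↑(Subfield.closure
          ({x : L | ∀ g ∈ G, g x = x} ∪ (⇑μ '' {x : L | ∀ g ∈ G, g x = x}))) := by
  have hfin : Finite G := hGfin.to_subtype
  set K := FixedPoints.subfield G L with hKdef
  have hKmem : ∀ x : L, x ∈ K ↔ ∀ g ∈ G, g x = x := by
    intro x
    constructor
    · intro hx g hg; exact hx ⟨g, hg⟩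
    · intro hx g; exact hx g g.2
  have hKset : {x : L | ∀ g ∈ G, g x = x} = (K : Set L) := by
    ext x; exact (hKmem x).symm
  -- Artin: every K-algebra endomorphism of L comes from G
  have artin : ∀ f : L →ₐ[K] L, ∃ g : G, ∀ y : L, (g : RingAut L) y = f y := by
    intro f
    obtain ⟨g, hg⟩ := (FixedPoints.toAlgHom_bijective G L).2 f
    exact ⟨g, fun y => by rw [← hg]; rfl⟩
  -- key: if g ∈ G fixes μ(K) pointwise then g μ g⁻¹ = μ
  have key : ∀ g : RingAut L, g ∈ G → (∀ x : L, x ∈ K → g (μ x) = μ x) →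
      g * μ * g⁻¹ = μ := by
    intro g hg hfix
    have hhfix : ∀ x : L, x ∈ K → (μ⁻¹ * g * μ) x = x := by
      intro x hx
      show μ⁻¹ (g (μ x)) = x
      rw [hfix x hx]
      exact μ.symm_apply_apply x
    let φ : L →ₐ[K] L :=
      { toRingHom := (μ⁻¹ * g * μ : RingAut L).toRingHom
        commutes' := fun k => hhfix k k.2 }
    obtain ⟨h, hh⟩ := artin φ
    have hhe : (h : RingAut L) = μ⁻¹ * g * μ := by
      ext y; exact hh y
    set h' : RingAut L := (h : RingAut L) with hh'def
    have hh'G : h' ∈ G := h.2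
    have hν : h'⁻¹ * μ * h' ∈ M := by
      have := hinv h'⁻¹ (G.inv_mem hh'G) μ hμ
      rwa [inv_inv] at this
    have hgof : g = μ * h' * μ⁻¹ := by
      rw [hhe]; group
    have hsepG : (h'⁻¹ * μ * h') * μ⁻¹ ∈ G := by
      have heq : (h'⁻¹ * μ * h') * μ⁻¹ = h'⁻¹ * g := by
        rw [hgof]; group
      rw [heq]
      exact G.mul_mem (G.inv_mem hh'G) hg
    have hcomm : h'⁻¹ * μ * h' = μ := hsep _ hν μ hμ hsepG
    have hμh : μ * h' = h' * μ := by
      calc μ * h' = h' * (h'⁻¹ * μ * h') := by group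
        _ = h' * μ := by rw [hcomm]
    have hg_eq : g = h' := by
      rw [hgof, hμh]; group
    rw [hg_eq, ← hμh]; group
  -- identify the closure with an intermediate field
  set E : IntermediateField K L := IntermediateField.adjoin K (⇑μ '' (K : Set L)) with hEdef
  have hEset : (↑(Subfield.closure
      ({x : L | ∀ g ∈ G, g x = x} ∪ (⇑μ '' {x : L | ∀ g ∈ G, g x = x}))) : Set L)
      = (E : Set L) := by
    rw [hKset]
    have hrange : Set.range (algebraMap K L) = (K : Set L) := by
      rw [FixedPoints.coe_algebraMap]
      exact Subtype.range_coe_subtype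
    show _ = (↑(Subfield.closure (Set.range (algebraMap K L) ∪ ⇑μ '' (K : Set L))) : Set L)
    rw [hrange]
  rw [Set.ext_iff] at hEset
  ext x
  simp only [Set.mem_setOf_eq]
  rw [SetLike.mem_coe, ← SetLike.mem_coe, hEset x]
  constructor
  · -- x fixed by G_μ implies x ∈ E
    intro hx
    rw [SetLike.mem_coe, ← IsGalois.fixedField_fixingSubgroup E]
    intro σ
    obtain ⟨g, hgeq⟩ := artin ((σ : L ≃ₐ[K] L) : L →ₐ[K] L)
    have hgfix : ∀ y : L, y ∈ K → (g : RingAut L) (μ y) = μ y := by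
      intro y hy
      have hmem : μ y ∈ (E : Set L) :=
        IntermediateField.subset_adjoin K _ ⟨y, hy, rfl⟩
      have := (mem_fixingSubgroup_iff (L ≃ₐ[K] L)).1 σ.2 (μ y) hmem
      rw [hgeq]
      exact this
    have hgμ : (g : RingAut L) * μ * (g : RingAut L)⁻¹ = μ := key g g.2 hgfix
    show (σ : L ≃ₐ[K] L) x = x
    exact (hgeq x).symm.trans (hx g g.2 hgμ)
  · -- x ∈ E is fixed by G_μ
    intro hx g hg hgμ
    have hx' : x ∈ Subfield.closure
        ({x : L | ∀ g ∈ G, g x = x} ∪ (⇑μ '' {x : L | ∀ g ∈ G, g x = x})) :=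
      (hEset x).2 hx
    have hcommute : ∀ y : L, g (μ y) = μ (g y) := by
      intro y
      have : g * μ = μ * g := by
        calc g * μ = (g * μ * g⁻¹) * g := by group
          _ = μ * g := by rw [hgμ]
      calc g (μ y) = (g * μ) y := rfl
        _ = (μ * g) y := by rw [this]
        _ = μ (g y) := rfl
    have heqon : Set.EqOn (g : RingAut L).toRingHom (RingHom.id L)
        ({x : L | ∀ g ∈ G, g x = x} ∪ (⇑μ '' {x : L | ∀ g ∈ G, g x = x})) := by
      rintro y (hy | ⟨k, hk, rfl⟩)
      · exact hy g hg
      · show g (μ k) = μ k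
        rw [hcommute k, hk g hg]
    exact RingHom.eqOn_field_closure heqon hx'
end

section
/- In the setup of a skew monoid ring ℒ = L∗ℳ with G-action as above, the K-bimodule K[μ]K, where [aμ] = Σ_{g ∈ G/G_μ} g(a)·(gμg⁻¹), equals {[aμ] : a ∈ L^{G_μ}}, and it is a simple K-bimodule. -/
section SkewDefs

variable {L : Type*} [Field L]

/-- Left multiplication of `X ∈ ℒ = L ∗ ℳ` (realized inside `RingAut L →₀ L`) by `k ∈ L`. -/
noncomputable def lsm (k : L) (X : RingAut L →₀ L) : RingAut L →₀ L :=
  X.sum fun ν c => Finsupp.single ν (k * c)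

/-- Right multiplication of `X ∈ ℒ = L ∗ ℳ` by `k ∈ L`: `(cν)·k = (c ν(k)) ν`. -/
noncomputable def rsm (X : RingAut L →₀ L) (k : L) : RingAut L →₀ L :=
  X.sum fun ν c => Finsupp.single ν (c * ν k)

/-- The symmetrized element `[aμ] = Σ_{t ∈ T} t(a)·(tμt⁻¹)`, where `T` is a transversal
of the cosets of `G_μ` in `G`. -/
noncomputable def bk (T : Finset (RingAut L)) (μ : RingAut L) (a : L) : RingAut L →₀ L :=
  ∑ t ∈ T, Finsupp.single (t * μ * t⁻¹) (t a)

end SkewDefs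

section Aux

variable {L : Type*} [Field L]

lemma ringAut_mul_apply (f g : RingAut L) (x : L) : (f * g) x = f (g x) := rfl

lemma ringAut_inv_apply (f : RingAut L) (x : L) : f⁻¹ x = f.symm x := rfl

lemma lsm_add (k : L) (X Y : RingAut L →₀ L) : lsm k (X + Y) = lsm k X + lsm k Y :=
  Finsupp.sum_add_index' (fun ν => by simp) (fun ν b₁ b₂ => by rw [mul_add, Finsupp.single_add])

lemma rsm_add (k : L) (X Y : RingAut L →₀ L) : rsm (X + Y) k = rsm X k + rsm Y k :=
  Finsupp.sum_add_index' (fun ν => by simp) (fun ν b₁ b₂ => by rw [add_mul, Finsupp.single_add])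

/-- `lsm k` as an additive monoid hom. -/
noncomputable def lsmHom (k : L) : (RingAut L →₀ L) →+ (RingAut L →₀ L) where
  toFun := lsm k
  map_zero' := by simp [lsm]
  map_add' := lsm_add k

/-- `fun X => rsm X k` as an additive monoid hom. -/
noncomputable def rsmHom (k : L) : (RingAut L →₀ L) →+ (RingAut L →₀ L) where
  toFun := fun X => rsm X k
  map_zero' := by simp [rsm]
  map_add' := rsm_add k

lemma lsm_single (k : L) (ν : RingAut L) (c : L) :
    lsm k (Finsupp.single ν c) = Finsupp.single ν (k * c) :=
  Finsupp.sum_single_index (by simp)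

lemma rsm_single (k : L) (ν : RingAut L) (c : L) :
    rsm (Finsupp.single ν c) k = Finsupp.single ν (c * ν k) :=
  Finsupp.sum_single_index (by simp)

/-- `bk T μ` as an additive monoid hom in `a`. -/
noncomputable def bkHom (T : Finset (RingAut L)) (μ : RingAut L) : L →+ (RingAut L →₀ L) where
  toFun := bk T μ
  map_zero' := by simp [bk]
  map_add' a b := by
    simp only [bk, map_add, Finsupp.single_add, Finset.sum_add_distrib]

lemma lsm_rsm_bk {G : Subgroup (RingAut L)} {T : Finset (RingAut L)}
    (hT1 : (↑T : Set (RingAut L)) ⊆ (G : Set (RingAut L)))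
    (μ : RingAut L) {k₁ k₂ : L}
    (hk₁ : ∀ g ∈ G, g k₁ = k₁) (hk₂ : ∀ g ∈ G, g k₂ = k₂) (a : L) :
    lsm k₁ (rsm (bk T μ a) k₂) = bk T μ (k₁ * a * μ k₂) := by
  have h1 : rsm (bk T μ a) k₂ = ∑ t ∈ T, Finsupp.single (t * μ * t⁻¹) (t a * (t * μ * t⁻¹) k₂) := by
    rw [bk]
    rw [show rsm (∑ t ∈ T, Finsupp.single (t * μ * t⁻¹) (t a)) k₂
        = rsmHom k₂ (∑ t ∈ T, Finsupp.single (t * μ * t⁻¹) (t a)) from rfl, map_sum]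
    exact Finset.sum_congr rfl fun t _ => rsm_single _ _ _
  rw [h1]
  rw [show lsm k₁ (∑ t ∈ T, Finsupp.single (t * μ * t⁻¹) (t a * (t * μ * t⁻¹) k₂))
      = lsmHom k₁ (∑ t ∈ T, Finsupp.single (t * μ * t⁻¹) (t a * (t * μ * t⁻¹) k₂)) from rfl,
    map_sum, bk]
  refine Finset.sum_congr rfl fun t ht => ?_
  have htG : t ∈ G := hT1 ht
  rw [show (lsmHom k₁) (Finsupp.single (t * μ * t⁻¹) (t a * (t * μ * t⁻¹) k₂))
      = Finsupp.single (t * μ * t⁻¹) (k₁ * (t a * (t * μ * t⁻¹) k₂)) from lsm_single _ _ _]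
  congr 1
  have ht2 : (t * μ * t⁻¹) k₂ = t (μ k₂) := by
    rw [ringAut_mul_apply, ringAut_mul_apply, ringAut_inv_apply,
      show t.symm k₂ = t⁻¹ k₂ from rfl, hk₂ t⁻¹ (G.inv_mem htG)]
  rw [ht2, map_mul, map_mul, hk₁ t htG]
  ring

end Aux

/-- With `K = L^G` and `T` a transversal of `G_μ = {g ∈ G : gμg⁻¹ = μ}` in `G`, the
`K`-bimodule `K[μ]K` generated by `[μ]` equals `{[aμ] : a ∈ L^{G_μ}}`, and it is a simple
`K`-bimodule: every nonzero `[aμ]` generates it. -/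
theorem stmt11 (L : Type*) [Field L] (G : Subgroup (RingAut L))
    (hGfin : (G : Set (RingAut L)).Finite)
    (M : Submonoid (RingAut L))
    (hsep : ∀ μ₁ ∈ M, ∀ μ₂ ∈ M, μ₁ * μ₂⁻¹ ∈ G → μ₁ = μ₂)
    (hinv : ∀ g ∈ G, ∀ ν ∈ M, g * ν * g⁻¹ ∈ M)
    (μ : RingAut L) (hμ : μ ∈ M)
    (T : Finset (RingAut L))
    (hT1 : (↑T : Set (RingAut L)) ⊆ (G : Set (RingAut L)))
    (hT2 : ∀ g ∈ G, ∃ t ∈ T, ∃ h ∈ G, h * μ * h⁻¹ = μ ∧ g = t * h)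
    (hT3 : ∀ t₁ ∈ T, ∀ t₂ ∈ T, (∃ h ∈ G, h * μ * h⁻¹ = μ ∧ t₁ = t₂ * h) → t₁ = t₂) :
    (↑(AddSubgroup.closure {Y : RingAut L →₀ L |
          ∃ k₁ ∈ {x : L | ∀ g ∈ G, g x = x}, ∃ k₂ ∈ {x : L | ∀ g ∈ G, g x = x},
            Y = lsm k₁ (rsm (bk T μ 1) k₂)})
        = {X : RingAut L →₀ L |
            ∃ a : L, (∀ h ∈ G, h * μ * h⁻¹ = μ → h a = a) ∧ X = bk T μ a})
    ∧ ∀ a : L, (∀ h ∈ G, h * μ * h⁻¹ = μ → h a = a) → a ≠ 0 →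
        ↑(AddSubgroup.closure {Y : RingAut L →₀ L |
            ∃ k₁ ∈ {x : L | ∀ g ∈ G, g x = x}, ∃ k₂ ∈ {x : L | ∀ g ∈ G, g x = x},
              Y = lsm k₁ (rsm (bk T μ a) k₂)})
          = {X : RingAut L →₀ L |
              ∃ b : L, (∀ h ∈ G, h * μ * h⁻¹ = μ → h b = b) ∧ X = bk T μ b} := by
  classical
  haveI : Finite ↥G := hGfin.to_subtype
  haveI : FaithfulSMul ↥G L :=
    ⟨fun {g h} H => Subtype.ext (RingEquiv.ext fun x => H x)⟩
  set K : Subfield L := FixedPoints.subfield ↥G L with hK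
  have hKmem : ∀ x : L, x ∈ K ↔ ∀ g ∈ G, g x = x := by
    intro x
    constructor
    · intro h g hg; exact h ⟨g, hg⟩
    · rintro h ⟨g, hg⟩; exact h g hg
  -- the fixed set `L^{G_μ}` as an additive subgroup
  set Fc : Set L := {b : L | ∀ h ∈ G, h * μ * h⁻¹ = μ → h b = b} with hFc
  have hFone : (1 : L) ∈ Fc := fun h _ _ => map_one h
  have hFmul : ∀ x ∈ Fc, ∀ y ∈ Fc, x * y ∈ Fc := fun x hx y hy h hG hst => by
    rw [map_mul, hx h hG hst, hy h hG hst]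
  have hFinv : ∀ x ∈ Fc, x⁻¹ ∈ Fc := fun x hx h hG hst => by
    rw [map_inv₀, hx h hG hst]
  set Fsub : AddSubgroup L :=
    { carrier := Fc
      zero_mem' := fun h _ _ => map_zero h
      add_mem' := fun {x y} hx hy h hG hst => by
        rw [map_add, hx h hG hst, hy h hG hst]
      neg_mem' := fun {x} hx h hG hst => by rw [map_neg, hx h hG hst] } with hFsub
  -- the additive subgroup `K·μ(K)` of `L`
  set A : AddSubgroup L :=
    AddSubgroup.closure {x : L | ∃ k₁ ∈ K, ∃ k₂ ∈ K, x = k₁ * μ k₂} with hA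
  have hKF : ∀ x ∈ K, x ∈ Fc := fun x hx h hG _ => (hKmem x).1 hx h hG
  have hμKF : ∀ k ∈ K, μ k ∈ Fc := by
    intro k hk h hG hst
    have hcomm : h * μ = μ * h := by
      have := hst
      calc h * μ = (h * μ * h⁻¹) * h := by group
        _ = μ * h := by rw [hst]
    calc h (μ k) = (h * μ) k := rfl
      _ = (μ * h) k := by rw [hcomm]
      _ = μ (h k) := rfl
      _ = μ k := by rw [(hKmem k).1 hk h hG]
  have hAF : (A : Set L) ⊆ Fc := by
    intro x hx
    refine AddSubgroup.closure_induction ?_ (fun h _ _ => map_zero h)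
      (fun x y _ _ hx hy h hG hst => by rw [map_add, hx h hG hst, hy h hG hst])
      (fun x _ hx h hG hst => by rw [map_neg, hx h hG hst]) hx
    rintro x ⟨k₁, hk₁, k₂, hk₂, rfl⟩
    exact hFmul _ (hKF _ hk₁) _ (hμKF _ hk₂)
  -- surjectivity of `G → Aut(L/K)`
  have hsurj : ∀ f : L →ₐ[K] L, ∃ g : ↥G, ∀ x : L, (g : RingAut L) x = f x := by
    intro f
    obtain ⟨g, hg⟩ := (FixedPoints.toAlgHom_bijective ↥G L).surjective f
    exact ⟨g, fun x => by rw [← hg]; rfl⟩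
  -- key: if `g ∈ G` fixes `μ(K)` pointwise, then `g` stabilizes `μ`
  have key : ∀ g : RingAut L, g ∈ G → (∀ k ∈ K, g (μ k) = μ k) → g * μ * g⁻¹ = μ := by
    intro g hg hfix
    have hfix2 : ∀ k ∈ K, (μ⁻¹ * g * μ) k = k := by
      intro k hk
      calc (μ⁻¹ * g * μ) k = μ⁻¹ (g (μ k)) := rfl
        _ = μ⁻¹ (μ k) := by rw [hfix k hk]
        _ = k := μ.symm_apply_apply k
    obtain ⟨g₂, hg₂⟩ := hsurj
      { toRingHom := ((μ⁻¹ * g * μ : RingAut L) : L →+* L)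
        commutes' := fun r => hfix2 r r.2 }
    have e : (g₂ : RingAut L) = μ⁻¹ * g * μ := RingEquiv.ext fun x => hg₂ x
    have hν : (g₂ : RingAut L)⁻¹ * μ * (g₂ : RingAut L) ∈ M := by
      have := hinv (g₂ : RingAut L)⁻¹ (G.inv_mem g₂.2) μ hμ
      rwa [inv_inv] at this
    have hGn : ((g₂ : RingAut L)⁻¹ * μ * (g₂ : RingAut L)) * μ⁻¹
        = (g₂ : RingAut L)⁻¹ * g := by rw [e]; group
    have hstab := hsep _ hν μ hμ (by
      rw [hGn]; exact G.mul_mem (G.inv_mem g₂.2) hg)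
    -- `hstab : g₂⁻¹ * μ * g₂ = μ`, so `μ * g₂ = g₂ * μ`
    have hcomm : μ * (g₂ : RingAut L) = (g₂ : RingAut L) * μ := by
      calc μ * (g₂ : RingAut L)
          = (g₂ : RingAut L) * ((g₂ : RingAut L)⁻¹ * μ * (g₂ : RingAut L)) := by group
        _ = (g₂ : RingAut L) * μ := by rw [hstab]
    have hgg : (g₂ : RingAut L) = g := by
      have h1 : μ * (g₂ : RingAut L) = g * μ := by rw [e]; group
      have h2 : (g₂ : RingAut L) * μ = g * μ := by rw [← hcomm, h1]
      exact mul_right_cancel h2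
    have : μ * g = g * μ := by rw [← hgg, hcomm]
    calc g * μ * g⁻¹ = μ * g * g⁻¹ := by rw [← this]
      _ = μ := by group
  -- Galois theory: `L^{G_μ} ⊆ K·μ(K)`
  have hFA : Fc ⊆ (A : Set L) := by
    haveI : FiniteDimensional K L :=
      inferInstanceAs (FiniteDimensional (FixedPoints.subfield ↥G L) L)
    haveI : IsGalois K L := inferInstanceAs (IsGalois (FixedPoints.subfield ↥G L) L)
    set S : IntermediateField K L := IntermediateField.adjoin K ((μ : L → L) '' (K : Set L))
      with hS
    -- `Fc ⊆ S`
    have hFS : ∀ b ∈ Fc, b ∈ S := by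
      intro b hb
      have hmem : b ∈ IntermediateField.fixedField (IntermediateField.fixingSubgroup S) := by
        intro σ
        obtain ⟨g, hgac⟩ := hsurj ((σ : L ≃ₐ[K] L) : L →ₐ[K] L)
        have hgfix : ∀ k ∈ K, (g : RingAut L) (μ k) = μ k := by
          intro k hk
          rw [hgac]
          exact σ.2 ⟨μ k, IntermediateField.subset_adjoin K _ ⟨k, hk, rfl⟩⟩
        have hstab := key (g : RingAut L) g.2 hgfix
        show (σ : L ≃ₐ[K] L) b = b
        exact (hgac b).symm.trans (hb (g : RingAut L) g.2 hstab)
      rwa [IsGalois.fixedField_fixingSubgroup S] at hmem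
    -- `S ⊆ A`
    have hSA : (S : Set L) ⊆ (A : Set L) := by
      have halg : ∀ x ∈ (μ : L → L) '' (K : Set L), IsAlgebraic K x := fun x _ =>
        Algebra.IsAlgebraic.isAlgebraic x
      have hsub : S.toSubalgebra = Algebra.adjoin K ((μ : L → L) '' (K : Set L)) :=
        IntermediateField.adjoin_toSubalgebra_of_isAlgebraic halg
      intro x hx
      have hx' : x ∈ Algebra.adjoin K ((μ : L → L) '' (K : Set L)) := by
        rw [← hsub]; exact hx
      have hx'' : x ∈ Submodule.span K ((Submonoid.closure ((μ : L → L) '' (K : Set L)) : Submonoid L) : Set L) := by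
        rw [← Algebra.adjoin_eq_span]; exact hx'
      -- the monoid closure of `μ(K)` is `μ(K)` itself
      have hmono : (Submonoid.closure ((μ : L → L) '' (K : Set L)) : Set L)
          ⊆ (μ : L → L) '' (K : Set L) := by
        have : Submonoid.closure ((μ : L → L) '' (K : Set L)) ≤
            { carrier := (μ : L → L) '' (K : Set L)
              one_mem' := ⟨1, K.one_mem, map_one μ⟩
              mul_mem' := by
                rintro x y ⟨k₁, hk₁, rfl⟩ ⟨k₂, hk₂, rfl⟩
                exact ⟨k₁ * k₂, K.mul_mem hk₁ hk₂, map_mul μ k₁ k₂⟩ } :=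
          Submonoid.closure_le.2 fun z hz => hz
        exact this
      -- `A` is stable under multiplication by elements of `K`
      have hsmul : ∀ c ∈ K, ∀ y ∈ A, c * y ∈ A := by
        intro c hc y hy
        refine AddSubgroup.closure_induction ?_ (by simpa using A.zero_mem)
          (fun u v _ _ hu hv => by rw [mul_add]; exact A.add_mem hu hv)
          (fun u _ hu => by rw [mul_neg]; exact A.neg_mem hu) hy
        rintro u ⟨k₁, hk₁, k₂, hk₂, rfl⟩
        rw [← mul_assoc]
        exact AddSubgroup.subset_closure ⟨c * k₁, K.mul_mem hc hk₁, k₂, hk₂, rfl⟩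
      refine Submodule.span_induction ?_ A.zero_mem (fun u v _ _ hu hv => A.add_mem hu hv)
        ?_ hx''
      · intro y hy
        obtain ⟨k, hk, rfl⟩ := hmono hy
        exact AddSubgroup.subset_closure ⟨1, K.one_mem, k, hk, (one_mul _).symm⟩
      · intro c y _ hy
        exact hsmul (c : L) c.2 y hy
    exact fun b hb => hSA (hFS b hb)
  -- the main argument, uniformly in `a`
  have main : ∀ a : L, a ∈ Fc → a ≠ 0 →
      ((AddSubgroup.closure {Y : RingAut L →₀ L |
          ∃ k₁ ∈ {x : L | ∀ g ∈ G, g x = x}, ∃ k₂ ∈ {x : L | ∀ g ∈ G, g x = x},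
            Y = lsm k₁ (rsm (bk T μ a) k₂)} : AddSubgroup (RingAut L →₀ L)) : Set (RingAut L →₀ L))
        = {X : RingAut L →₀ L |
            ∃ b : L, (∀ h ∈ G, h * μ * h⁻¹ = μ → h b = b) ∧ X = bk T μ b} := by
    intro a ha ha0
    apply subset_antisymm
    · -- closure ⊆ {bk T μ b}
      have himage : {X : RingAut L →₀ L |
            ∃ b : L, (∀ h ∈ G, h * μ * h⁻¹ = μ → h b = b) ∧ X = bk T μ b}
          = ↑(Fsub.map (bkHom T μ)) := by
        ext X
        simp only [Set.mem_setOf_eq, AddSubgroup.coe_map, Set.mem_image, SetLike.mem_coe]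
        constructor
        · rintro ⟨b, hb, rfl⟩; exact ⟨b, hb, rfl⟩
        · rintro ⟨b, hb, rfl⟩; exact ⟨b, hb, rfl⟩
      rw [himage]
      refine (AddSubgroup.closure_le _).2 ?_
      rintro Y ⟨k₁, hk₁, k₂, hk₂, rfl⟩
      have heq := lsm_rsm_bk hT1 μ hk₁ hk₂ a
      rw [heq]
      refine ⟨k₁ * a * μ k₂, ?_, rfl⟩
      have hkK₁ : k₁ ∈ K := (hKmem k₁).2 hk₁
      have hkK₂ : k₂ ∈ K := (hKmem k₂).2 hk₂
      exact hFmul _ (hFmul _ (hKF _ hkK₁) _ ha) _ (hμKF _ hkK₂)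
    · -- {bk T μ b} ⊆ closure
      rintro X ⟨b, hb, rfl⟩
      have hc : a⁻¹ * b ∈ Fc := hFmul _ (hFinv _ ha) _ hb
      have hcA : a⁻¹ * b ∈ A := hFA hc
      have hrec : b = a * (a⁻¹ * b) := by field_simp
      rw [hrec]
      -- induction over the additive closure
      refine AddSubgroup.closure_induction
        (k := {x : L | ∃ k₁ ∈ K, ∃ k₂ ∈ K, x = k₁ * μ k₂})
        (p := fun c _ => bk T μ (a * c) ∈ AddSubgroup.closure {Y : RingAut L →₀ L |
          ∃ k₁ ∈ {x : L | ∀ g ∈ G, g x = x}, ∃ k₂ ∈ {x : L | ∀ g ∈ G, g x = x},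
            Y = lsm k₁ (rsm (bk T μ a) k₂)}) ?_ ?_ ?_ ?_ hcA
      · rintro c ⟨k₁, hk₁, k₂, hk₂, rfl⟩
        show bk T μ (a * (k₁ * μ k₂)) ∈ _
        have h1 : a * (k₁ * μ k₂) = k₁ * a * μ k₂ := by ring
        rw [h1, ← lsm_rsm_bk hT1 μ (fun g hg => (hKmem k₁).1 hk₁ g hg)
          (fun g hg => (hKmem k₂).1 hk₂ g hg) a]
        exact AddSubgroup.subset_closure
          ⟨k₁, fun g hg => (hKmem k₁).1 hk₁ g hg, k₂, fun g hg => (hKmem k₂).1 hk₂ g hg, rfl⟩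
      · show bk T μ (a * 0) ∈ _
        rw [mul_zero, show bk T μ 0 = 0 from (bkHom T μ).map_zero]
        exact AddSubgroup.zero_mem _
      · intro x y _ _ hx hy
        show bk T μ (a * (x + y)) ∈ _
        rw [mul_add, show bk T μ (a * x + a * y) = bk T μ (a * x) + bk T μ (a * y) from
          (bkHom T μ).map_add _ _]
        exact AddSubgroup.add_mem _ hx hy
      · intro x _ hx
        show bk T μ (a * -x) ∈ _
        rw [mul_neg, show bk T μ (-(a * x)) = -(bk T μ (a * x)) from (bkHom T μ).map_neg _]
        exact AddSubgroup.neg_mem _ hx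
  exact ⟨main 1 hFone one_ne_zero, fun a ha ha0 => main a ha ha0⟩
end

section
/- In the setup above, 𝒦 = ℒ^G decomposes as a K-bimodule as the direct sum over G-orbits of ℳ: 𝒦 = ⊕_{μ ∈ ℳ/G} K[μ]K. -/
/-- The action of an automorphism `g` on `ℒ = L ∗ ℳ` (inside `RingAut L →₀ L`) by
`g(aν) = g(a)(gνg⁻¹)`. -/
noncomputable def gactR {L : Type*} [Field L] (g : RingAut L) (X : RingAut L →₀ L) :
    RingAut L →₀ L :=
  X.sum fun ν c => Finsupp.single (g * ν * g⁻¹) (g c)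

lemma gactR_apply {L : Type*} [Field L] (g : RingAut L) (X : RingAut L →₀ L)
    (ν : RingAut L) : gactR g X ν = g (X (g⁻¹ * ν * g)) := by
  classical
  rw [gactR, Finsupp.sum_apply, Finsupp.sum,
    Finset.sum_eq_single (g⁻¹ * ν * g)]
  · have : g * (g⁻¹ * ν * g) * g⁻¹ = ν := by group
    simp [this]
  · intro b _ hb
    rw [Finsupp.single_apply, if_neg]
    intro h
    apply hb
    rw [← h]; group
  · intro h
    rw [Finsupp.notMem_support_iff.mp h]
    simp

open scoped Classical in
/-- `𝒦 = ℒ^G` decomposes as a direct sum over `G`-orbits in `ℳ`: every `G`-invariant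
`X ∈ L ∗ ℳ` has `G_ν`-invariant coefficients, its orbit components are again `G`-invariant
(and of the form `[aμ]`, i.e. lie in `K[μ]K`), and `X` is the (direct) sum of its orbit
components over any set of representatives of the orbits meeting its support. -/
theorem stmt13 (L : Type*) [Field L] (G : Subgroup (RingAut L))
    (hGfin : (G : Set (RingAut L)).Finite)
    (M : Submonoid (RingAut L))
    (hsep : ∀ ν₁ ∈ M, ∀ ν₂ ∈ M, ν₁ * ν₂⁻¹ ∈ G → ν₁ = ν₂)
    (hinv : ∀ g ∈ G, ∀ ν ∈ M, g * ν * g⁻¹ ∈ M)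
    (X : RingAut L →₀ L)
    (hsupp : ∀ ν, X ν ≠ 0 → ν ∈ M)
    (hfix : ∀ g ∈ G, gactR g X = X) :
    (∀ ν : RingAut L, ∀ g ∈ G, g * ν * g⁻¹ = ν → g (X ν) = X ν)
    ∧ (∀ μ : RingAut L, ∀ g ∈ G,
        gactR g (X.filter fun ν => ∃ h ∈ G, h * μ * h⁻¹ = ν)
          = X.filter fun ν => ∃ h ∈ G, h * μ * h⁻¹ = ν)
    ∧ (∀ s : Finset (RingAut L), (↑s : Set (RingAut L)) ⊆ (M : Set (RingAut L)) →
        (∀ μ ∈ s, ∀ μ' ∈ s, μ ≠ μ' → ¬∃ g ∈ G, g * μ * g⁻¹ = μ') →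
        (∀ ν, X ν ≠ 0 → ∃ μ ∈ s, ∃ g ∈ G, g * μ * g⁻¹ = ν) →
        X = ∑ μ ∈ s, X.filter fun ν => ∃ h ∈ G, h * μ * h⁻¹ = ν) := by
  have key : ∀ g ∈ G, ∀ ν, g (X (g⁻¹ * ν * g)) = X ν := by
    intro g hg ν
    conv_rhs => rw [← hfix g hg]
    rw [gactR_apply]
  refine ⟨?_, ?_, ?_⟩
  · intro ν g hg hfixν
    have h1 : g⁻¹ * ν * g = ν := by
      conv_lhs => rw [← hfixν]
      group
    conv_lhs => rw [← h1]
    exact key g hg ν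
  · intro μ g hg
    ext ν
    rw [gactR_apply, Finsupp.filter_apply, Finsupp.filter_apply]
    have hiff : (∃ h ∈ G, h * μ * h⁻¹ = g⁻¹ * ν * g) ↔ (∃ h ∈ G, h * μ * h⁻¹ = ν) := by
      constructor
      · rintro ⟨h, hh, he⟩
        exact ⟨g * h, G.mul_mem hg hh, by rw [show g * h * μ * (g * h)⁻¹ = g * (h * μ * h⁻¹) * g⁻¹ by group, he]; group⟩
      · rintro ⟨h, hh, he⟩
        exact ⟨g⁻¹ * h, G.mul_mem (G.inv_mem hg) hh, by rw [show g⁻¹ * h * μ * (g⁻¹ * h)⁻¹ = g⁻¹ * (h * μ * h⁻¹) * g by group, he]⟩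
    by_cases hc : ∃ h ∈ G, h * μ * h⁻¹ = ν
    · rw [if_pos (hiff.mpr hc), if_pos hc, key g hg]
    · rw [if_neg (fun h => hc (hiff.mp h)), if_neg hc, map_zero]
  · intro s _ hpair hcov
    ext ν
    rw [Finset.sum_apply']
    by_cases hν : X ν = 0
    · rw [hν]
      refine (Finset.sum_eq_zero ?_).symm
      intro μ _
      rw [Finsupp.filter_apply]
      split <;> simp [hν]
    · obtain ⟨μ₀, hμ₀s, hμ₀⟩ := hcov ν hν
      rw [Finset.sum_eq_single μ₀]
      · rw [Finsupp.filter_apply, if_pos hμ₀]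
      · intro μ hμs hne
        rw [Finsupp.filter_apply, if_neg]
        rintro ⟨h, hh, he⟩
        obtain ⟨h', hh', hh'e⟩ := hμ₀
        refine hpair μ hμs μ₀ hμ₀s (fun heq => ?_)
          ⟨h'⁻¹ * h, G.mul_mem (G.inv_mem hh') hh, ?_⟩
        · exact hne (heq ▸ rfl)
        · have : h' * μ₀ * h'⁻¹ = h * μ * h⁻¹ := by rw [he, hh'e]
          rw [show h'⁻¹ * h * μ * (h'⁻¹ * h)⁻¹ = h'⁻¹ * (h * μ * h⁻¹) * h' by group, ← this]
          group
      · intro h; exact absurd hμ₀s h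
end

section
/- Let Λ = k[x₁^{±1},…,xₙ^{±1}] be the Laurent polynomial ring, and let G = G(2,2,n) = Sₙ ⋉ A(2,2,n) act by g(xᵢ) = αᵢ x_{σ(i)} where α ∈ {±1}ⁿ with ∏αᵢ = 1. Let sgn : G → {±1} be given by sgn(σα) = sgn(σ). Then Λ^G_{sgn} = Λ^G · 𝒱_q where 𝒱_q = ∏_{i<j} ((xᵢ/xⱼ) − (xᵢ/xⱼ)⁻¹)/(q − q⁻¹), for q ∈ k nonzero and not a root of unity. -/
section QOGZ

variable {k : Type*} [Field k] (n : ℕ)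

/-- The action of `g = σα ∈ G(2,2,n) = Sₙ ⋉ A(2,2,n)` on the Laurent polynomial ring
`k[x₁^{±1},…,xₙ^{±1}]` (realized as `AddMonoidAlgebra k (Fin n → ℤ)`), determined by
`g(xᵢ) = αᵢ x_{σ(i)}`; on a monomial `x^m` it gives `(∏ᵢ αᵢ^{mᵢ}) x^{m∘σ⁻¹}`. -/
noncomputable def lact (σ : Equiv.Perm (Fin n)) (α : Fin n → ℤˣ)
    (f : AddMonoidAlgebra k (Fin n → ℤ)) : AddMonoidAlgebra k (Fin n → ℤ) :=
  Finsupp.sum f.coeff fun m c =>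
    AddMonoidAlgebra.single (m ∘ ⇑σ.symm) (c * ∏ i, ((α i : ℤ) : k) ^ (m i))

/-- The `q`-Vandermonde `𝒱_q = ∏_{i<j} ((xᵢ/xⱼ) − (xᵢ/xⱼ)⁻¹)/(q − q⁻¹)`. -/
noncomputable def qVandermonde (q : k) : AddMonoidAlgebra k (Fin n → ℤ) :=
  ∏ i : Fin n, ∏ j ∈ Finset.Ioi i,
    (AddMonoidAlgebra.single (Pi.single i (1 : ℤ) - Pi.single j (1 : ℤ)) ((q - q⁻¹)⁻¹)
      - AddMonoidAlgebra.single (Pi.single j (1 : ℤ) - Pi.single i (1 : ℤ)) ((q - q⁻¹)⁻¹))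

end QOGZ


open Finset

section Stmt17Aux
variable {k : Type*} [Field k] {n : ℕ}
abbrev LL (k : Type*) [Field k] (n : ℕ) := AddMonoidAlgebra k (Fin n → ℤ)





def ee (i : Fin n) : Fin n → ℤ := Pi.single i 1

lemma ee_apply (i t : Fin n) : ee i t = if t = i then 1 else 0 := Pi.single_apply i 1 t

lemma ee_inj : Function.Injective (ee (n := n)) := by
  intro a b h
  by_contra hab
  have := congrFun h a
  simp [ee_apply, hab] at this

/-- twisted algebra endomorphism of the Laurent ring -/
noncomputable def TW (A : (Fin n → ℤ) →+ (Fin n → ℤ))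
    (χ : Multiplicative (Fin n → ℤ) →* k) : LL k n →ₐ[k] LL k n :=
  AddMonoidAlgebra.lift k (LL k n) (Fin n → ℤ)
    { toFun := fun m => AddMonoidAlgebra.single (A m.toAdd) (χ m)
      map_one' := by
        simp only [toAdd_one, map_zero, map_one]
        rfl
      map_mul' := fun a b => by
        show AddMonoidAlgebra.single _ _ = _
        rw [AddMonoidAlgebra.single_mul_single, toAdd_mul, map_add, map_mul] }

lemma TW_single (A : (Fin n → ℤ) →+ (Fin n → ℤ)) (χ : Multiplicative (Fin n → ℤ) →* k)
    (m : Fin n → ℤ) (c : k) :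
    TW A χ (AddMonoidAlgebra.single m c)
      = AddMonoidAlgebra.single (A m) (c * χ (Multiplicative.ofAdd m)) := by
  rw [TW, AddMonoidAlgebra.lift_single]
  show c • AddMonoidAlgebra.single (A (Multiplicative.ofAdd m).toAdd) _ = _
  rw [toAdd_ofAdd, AddMonoidAlgebra.smul_single']

lemma TW_apply (A : (Fin n → ℤ) →+ (Fin n → ℤ)) (χ : Multiplicative (Fin n → ℤ) →* k)
    (f : LL k n) :
    TW A χ f = f.coeff.sum fun m c => AddMonoidAlgebra.single (A m) (c * χ (Multiplicative.ofAdd m)) := by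
  conv_lhs => rw [← AddMonoidAlgebra.sum_coeff_single f, map_finsuppSum]
  exact Finsupp.sum_congr fun m _ => TW_single A χ m _


lemma eps_ne (α : Fin n → ℤˣ) (i : Fin n) : ((α i : ℤ) : k) ≠ 0 := by
  rcases Int.units_eq_one_or (α i) with h | h <;> rw [h] <;> simp

/-- the character m ↦ ∏ αᵢ^{mᵢ} -/
noncomputable def chiHom (α : Fin n → ℤˣ) : Multiplicative (Fin n → ℤ) →* k where
  toFun := fun m => ∏ i, ((α i : ℤ) : k) ^ (m.toAdd i)
  map_one' := by simp
  map_mul' := fun a b => by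
    show ∏ i, ((α i : ℤ) : k) ^ ((a * b).toAdd i)
      = (∏ i, ((α i : ℤ) : k) ^ (a.toAdd i)) * (∏ i, ((α i : ℤ) : k) ^ (b.toAdd i))
    rw [← Finset.prod_mul_distrib]
    refine Finset.prod_congr rfl fun i _ => ?_
    rw [toAdd_mul, Pi.add_apply, zpow_add₀ (eps_ne α i)]

lemma chiHom_apply (α : Fin n → ℤˣ) (m : Fin n → ℤ) :
    chiHom α (Multiplicative.ofAdd m) = ∏ i, ((α i : ℤ) : k) ^ (m i) := rfl

def permHom (σ : Equiv.Perm (Fin n)) : (Fin n → ℤ) →+ (Fin n → ℤ) where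
  toFun := fun m => m ∘ σ.symm
  map_zero' := rfl
  map_add' := fun _ _ => rfl

def subA (i j : Fin n) : (Fin n → ℤ) →+ (Fin n → ℤ) where
  toFun := fun m => m + m i • (ee j - ee i)
  map_zero' := by simp
  map_add' := fun a b => by
    show (a + b) + (a + b) i • (ee j - ee i) = _
    rw [Pi.add_apply, add_smul]
    abel

lemma subA_apply (i j : Fin n) (m : Fin n → ℤ) (t : Fin n) :
    subA i j m t = m t + m i * (ee j t - ee i t) := by
  show (m + m i • (ee j - ee i)) t = _
  simp [smul_eq_mul]

noncomputable def powChi (ε : k) (hε : ε ≠ 0) (i : Fin n) : Multiplicative (Fin n → ℤ) →* k where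
  toFun := fun m => ε ^ (m.toAdd i)
  map_one' := by simp
  map_mul' := fun a b => by
    show ε ^ ((a.toAdd + b.toAdd) i) = _
    rw [Pi.add_apply, zpow_add₀ hε]

lemma powChi_apply (ε : k) (hε : ε ≠ 0) (i : Fin n) (m : Fin n → ℤ) :
    powChi ε hε i (Multiplicative.ofAdd m) = ε ^ (m i) := rfl


lemma lact_eq (σ : Equiv.Perm (Fin n)) (α : Fin n → ℤˣ) (f : LL k n) :
    lact n σ α f = TW (permHom σ) (chiHom α) f := by
  rw [lact, TW_apply]
  exact Finsupp.sum_congr fun m _ => rfl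

lemma TW_comp_eq (A A' : (Fin n → ℤ) →+ (Fin n → ℤ))
    (χ χ' : Multiplicative (Fin n → ℤ) →* k)
    (h1 : ∀ m, A' (A m) = A' m)
    (h2 : ∀ m : Fin n → ℤ, χ (.ofAdd m) * χ' (.ofAdd (A m)) = χ' (.ofAdd m)) (f : LL k n) :
    TW A' χ' (TW A χ f) = TW A' χ' f := by
  induction f using AddMonoidAlgebra.induction_linear with
  | zero => simp
  | add f g hf hg => rw [map_add, map_add, map_add, hf, hg]
  | single m c =>
    rw [TW_single, TW_single, TW_single, h1, mul_assoc, h2]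

lemma chi_e (α : Fin n → ℤˣ) (i : Fin n) :
    chiHom α (Multiplicative.ofAdd (ee i)) = ((α i : ℤ) : k) := by
  rw [chiHom_apply]
  have h : ∀ t : Fin n, ((α t : ℤ) : k) ^ (ee i t) = if t = i then ((α t : ℤ) : k) else 1 := by
    intro t
    rcases eq_or_ne t i with rfl | h
    · rw [ee, Pi.single_eq_same, zpow_one, if_pos rfl]
    · rw [ee, Pi.single_eq_of_ne h, zpow_zero, if_neg h]
  rw [Finset.prod_congr rfl fun t _ => h t, Finset.prod_ite_eq', if_pos (Finset.mem_univ i)]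

lemma chi_sq (α : Fin n → ℤˣ) (i : Fin n) :
    chiHom α (Multiplicative.ofAdd (ee i + ee i)) = (1 : k) := by
  rw [ofAdd_add, map_mul, chi_e]
  have : ((α i : ℤ) : k) * ((α i : ℤ) : k) = (((α i * α i : ℤˣ) : ℤ) : k) := by push_cast; ring
  rw [this, Int.units_mul_self]
  simp

lemma chi_prod (α : Fin n → ℤˣ) (hα : ∏ i, α i = 1) :
    ∏ i, ((α i : ℤ) : k) = 1 := by
  have h1 : ∏ i, ((α i : ℤ) : k) = (((∏ i, α i : ℤˣ) : ℤ) : k) := by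
    push_cast
    rfl
  rw [h1, hα]; simp

lemma chi_const (α : Fin n → ℤˣ) (hα : ∏ i, α i = 1) (z : ℤ) :
    chiHom α (Multiplicative.ofAdd (fun _ => z)) = (1 : k) := by
  rw [chiHom_apply, Finset.prod_zpow, chi_prod α hα, one_zpow]

lemma counts (x : Fin n) : ((Ioi x).card : ℤ) + ((Iio x).card : ℤ) = (n : ℤ) - 1 := by
  have hx := x.is_lt
  rw [Fin.card_Ioi, Fin.card_Iio]
  omega

lemma cnt (τ : Equiv.Perm (Fin n)) (x : Fin n) :
    (∑ i, ∑ j ∈ Ioi i, (ee (τ i) + ee (τ j))) x = (n : ℤ) - 1 := by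
  set y := τ.symm x with hy
  have he : ∀ a : Fin n, ee (τ a) x = if a = y then 1 else 0 := by
    intro a
    rw [ee_apply]
    congr 1
    rw [eq_iff_iff]
    constructor
    · intro h; rw [hy, h, Equiv.symm_apply_apply]
    · intro h; rw [h, hy, Equiv.apply_symm_apply]
  rw [Finset.sum_apply]
  have hsum : ∀ i : Fin n, (∑ j ∈ Ioi i, (ee (τ i) + ee (τ j))) x
      = ∑ j ∈ Ioi i, (ee (τ i) x + ee (τ j) x) := by
    intro i; rw [Finset.sum_apply]; rfl
  rw [Finset.sum_congr rfl fun i _ => hsum i]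
  have split : ∀ i : Fin n, ∑ j ∈ Ioi i, (ee (τ i) x + ee (τ j) x)
      = ((Ioi i).card : ℤ) * (if i = y then 1 else 0) + ∑ j ∈ Ioi i, ee (τ j) x := by
    intro i
    rw [Finset.sum_add_distrib, Finset.sum_const, he i]
    simp [mul_comm]
  rw [Finset.sum_congr rfl fun i _ => split i, Finset.sum_add_distrib]
  have p1 : ∑ i : Fin n, ((Ioi i).card : ℤ) * (if i = y then 1 else 0) = ((Ioi y).card : ℤ) := by
    rw [Finset.sum_congr rfl (g := fun i => if i = y then ((Ioi i).card : ℤ) else 0)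
      (fun i _ => by by_cases h : i = y <;> simp [h])]
    rw [Finset.sum_ite_eq' Finset.univ y, if_pos (Finset.mem_univ y)]
  have p2 : ∑ i : Fin n, ∑ j ∈ Ioi i, ee (τ j) x = ((Iio y).card : ℤ) := by
    rw [Finset.sum_comm' (s := Finset.univ) (t := fun i => Ioi i) (t' := Finset.univ)
      (s' := fun j => Iio j) (fun a b => by simp [and_comm])]
    have inner : ∀ j : Fin n, ∑ i ∈ Iio j, ee (τ j) x = ((Iio j).card : ℤ) * (if j = y then 1 else 0) := by
      intro j; rw [Finset.sum_const, he j]; simp [mul_comm]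
    rw [Finset.sum_congr rfl fun j _ => inner j]
    rw [Finset.sum_congr rfl (g := fun j => if j = y then ((Iio j).card : ℤ) else 0)
      (fun j _ => by by_cases h : j = y <;> simp [h])]
    rw [Finset.sum_ite_eq' Finset.univ y, if_pos (Finset.mem_univ y)]
  rw [p1, p2, counts]

lemma sum_pairs (τ : Equiv.Perm (Fin n)) :
    (∑ i, ∑ j ∈ Ioi i, (-(ee (τ i)) - ee (τ j))) = (fun _ => (1 : ℤ) - n) := by
  have h2 : (∑ i, ∑ j ∈ Ioi i, (-(ee (τ i)) - ee (τ j)))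
      = -(∑ i, ∑ j ∈ Ioi i, (ee (τ i) + ee (τ j))) := by
    rw [← Finset.sum_neg_distrib]
    refine Finset.sum_congr rfl fun i _ => ?_
    rw [← Finset.sum_neg_distrib]
    exact Finset.sum_congr rfl fun j _ => by abel
  rw [h2]
  funext x
  rw [Pi.neg_apply, cnt τ x]
  ring

lemma prod_single {ι : Type*} (s : Finset ι) (a : ι → (Fin n → ℤ)) (c : ι → k) :
    (∏ x ∈ s, (AddMonoidAlgebra.single (a x) (c x) : LL k n))
      = AddMonoidAlgebra.single (∑ x ∈ s, a x) (∏ x ∈ s, c x) := by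
  induction s using Finset.cons_induction with
  | empty => simp [AddMonoidAlgebra.one_def]
  | cons x s hx ih =>
    rw [Finset.prod_cons, Finset.sum_cons, Finset.prod_cons, ih,
      AddMonoidAlgebra.single_mul_single]

noncomputable def Sprod (c : k) : LL k n := ∏ i, ∏ j ∈ Ioi i, AddMonoidAlgebra.single (-(ee i) - ee j) c

noncomputable def V0 (k : Type*) [Field k] (n : ℕ) : LL k n :=
  ∏ i, ∏ j ∈ Ioi i, (AddMonoidAlgebra.single (ee i + ee i) (1 : k)
    - AddMonoidAlgebra.single (ee j + ee j) (1 : k))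

lemma qV_eq (q : k) : qVandermonde n q = Sprod ((q - q⁻¹)⁻¹) * V0 k n := by
  rw [qVandermonde, Sprod, V0, ← Finset.prod_mul_distrib]
  refine Finset.prod_congr rfl fun i _ => ?_
  rw [← Finset.prod_mul_distrib]
  refine Finset.prod_congr rfl fun j _ => ?_
  rw [mul_sub, AddMonoidAlgebra.single_mul_single, AddMonoidAlgebra.single_mul_single,
    mul_one]
  have h1 : (-(ee i) - ee j) + (ee i + ee i) = ee i - ee j := by abel
  have h2 : (-(ee i) - ee j) + (ee j + ee j) = ee j - ee i := by abel
  rw [h1, h2]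
  rfl

lemma Sprod_perm_eq (τ : Equiv.Perm (Fin n)) (c : k) :
    (∏ i, ∏ j ∈ Ioi i, (AddMonoidAlgebra.single (-(ee (τ i)) - ee (τ j)) c : LL k n))
      = AddMonoidAlgebra.single (fun _ => (1 : ℤ) - n) (∏ i : Fin n, ∏ j ∈ Ioi i, c) := by
  rw [Finset.prod_congr rfl fun i (_ : i ∈ Finset.univ) =>
    prod_single (Ioi i) (fun j => -(ee (τ i)) - ee (τ j)) (fun _ => c)]
  rw [prod_single Finset.univ _ _, ← sum_pairs τ]

lemma Sprod_eq (c : k) :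
    Sprod c = (AddMonoidAlgebra.single (fun _ => (1 : ℤ) - n) (∏ i : Fin n, ∏ j ∈ Ioi i, c) : LL k n) := by
  have h := Sprod_perm_eq (Equiv.refl (Fin n)) c
  simpa [Sprod] using h

lemma sub_single_ne (m m' : Fin n → ℤ) (a b : k) (hm : m ≠ m') (ha : a ≠ 0) :
    (AddMonoidAlgebra.single m a - AddMonoidAlgebra.single m' b : LL k n) ≠ 0 := by
  intro h
  apply ha
  have h' : (Finsupp.single m a - Finsupp.single m' b : (Fin n → ℤ) →₀ k) = 0 := congrArg AddMonoidAlgebra.coeff h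
  have h2 := DFunLike.congr_fun h' m
  rwa [Finsupp.sub_apply, Finsupp.single_eq_same, Finsupp.single_eq_of_ne' (Ne.symm hm),
    sub_zero, Finsupp.coe_zero, Pi.zero_apply] at h2

lemma ee2_ne {i j : Fin n} (hij : i ≠ j) : ee i + ee i ≠ ee j + ee j := by
  intro h
  have h2 := congrFun h i
  simp [ee, Pi.single_apply, hij] at h2

lemma V0_ne : (V0 k n) ≠ 0 := by
  rw [V0]
  rw [Finset.prod_ne_zero_iff]
  intro i _
  rw [Finset.prod_ne_zero_iff]
  intro j hj
  exact sub_single_ne _ _ _ _ (ee2_ne (ne_of_lt (Finset.mem_Ioi.mp hj))) one_ne_zero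

noncomputable def xu (m : Fin n → ℤ) (c : kˣ) : (LL k n)ˣ where
  val := AddMonoidAlgebra.single m (c : k)
  inv := AddMonoidAlgebra.single (-m) ((c⁻¹ : kˣ) : k)
  val_inv := by
    rw [AddMonoidAlgebra.single_mul_single, add_neg_cancel]
    rw [← Units.val_mul, mul_inv_cancel]
    rfl
  inv_val := by
    rw [AddMonoidAlgebra.single_mul_single, neg_add_cancel]
    rw [← Units.val_mul, inv_mul_cancel]
    rfl

lemma xu_pow (m : Fin n → ℤ) (c : kˣ) (N : ℕ) : xu m c ^ N = xu (N • m) (c ^ N) := by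
  apply Units.ext
  rw [Units.val_pow_eq_pow_val]
  show (AddMonoidAlgebra.single m (c : k)) ^ N = AddMonoidAlgebra.single (N • m) ((c ^ N : kˣ) : k)
  rw [AddMonoidAlgebra.single_pow, Units.val_pow_eq_pow_val]

lemma xu_zpow_val (m : Fin n → ℤ) (c : kˣ) (z : ℤ) :
    ((xu m c ^ z : (LL k n)ˣ) : LL k n) = AddMonoidAlgebra.single (z • m) ((c : k) ^ z) := by
  cases z with
  | ofNat N =>
    rw [Int.ofNat_eq_coe, zpow_natCast, xu_pow]
    show AddMonoidAlgebra.single ((N : ℕ) • m) ((c ^ N : kˣ) : k) = _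
    rw [Units.val_pow_eq_pow_val, natCast_zsmul, zpow_natCast]
  | negSucc N =>
    rw [zpow_negSucc, xu_pow]
    show AddMonoidAlgebra.single (-((N + 1) • m)) (((c ^ (N + 1))⁻¹ : kˣ) : k) = _
    rw [zpow_negSucc, ← Units.val_pow_eq_pow_val, ← Units.val_inv_eq_inv_val]
    congr 1
    rw [negSucc_zsmul]

lemma units_sub_dvd {R : Type*} [CommRing R] (a b : Rˣ) (z : ℤ) :
    ((a : R) - (b : R)) ∣ ((a ^ z : Rˣ) : R) - ((b ^ z : Rˣ) : R) := by
  cases z with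
  | ofNat N =>
    rw [Int.ofNat_eq_coe, zpow_natCast, zpow_natCast, Units.val_pow_eq_pow_val,
      Units.val_pow_eq_pow_val]
    exact sub_dvd_pow_sub_pow _ _ N
  | negSucc N =>
    rw [zpow_negSucc, zpow_negSucc]
    have key : (((a ^ (N + 1))⁻¹ : Rˣ) : R) - (((b ^ (N + 1))⁻¹ : Rˣ) : R)
        = ((((a ^ (N + 1))⁻¹ * (b ^ (N + 1))⁻¹ : Rˣ)) : R)
          * (((b ^ (N + 1) : Rˣ)) - ((a ^ (N + 1) : Rˣ)) : R) := by
      rw [Units.val_mul, mul_sub]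
      rw [mul_assoc, ← Units.val_mul, inv_mul_cancel, Units.val_one, mul_one]
      rw [mul_comm (((a ^ (N + 1))⁻¹ : Rˣ) : R), mul_assoc, ← Units.val_mul, inv_mul_cancel,
        Units.val_one, mul_one]
    rw [key]
    refine Dvd.dvd.mul_left ?_ _
    have h1 : ((a : R) - b) ∣ ((a ^ (N + 1) : Rˣ) : R) - ((b ^ (N + 1) : Rˣ) : R) := by
      rw [Units.val_pow_eq_pow_val, Units.val_pow_eq_pow_val]
      exact sub_dvd_pow_sub_pow _ _ _
    rw [show ((b ^ (N + 1) : Rˣ) : R) - ((a ^ (N + 1) : Rˣ) : R)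
      = -(((a ^ (N + 1) : Rˣ) : R) - ((b ^ (N + 1) : Rˣ) : R)) by ring]
    exact dvd_neg.mpr h1

lemma single_sub_dvd (i j : Fin n) (εu : kˣ) (z : ℤ) :
    (AddMonoidAlgebra.single (ee i) 1 - AddMonoidAlgebra.single (ee j) ((εu : k)) : LL k n)
      ∣ AddMonoidAlgebra.single (z • ee i) 1 - AddMonoidAlgebra.single (z • ee j) ((εu : k) ^ z) := by
  have h := units_sub_dvd (xu (ee i) 1) (xu (ee j) εu) z
  rw [xu_zpow_val, xu_zpow_val] at h
  simpa [xu, one_zpow] using h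

lemma dvd_sub_TW (i j : Fin n) (εu : kˣ) (h : LL k n) :
    (AddMonoidAlgebra.single (ee i) 1 - AddMonoidAlgebra.single (ee j) ((εu : k)) : LL k n)
      ∣ h - TW (subA i j) (powChi (εu : k) (Units.ne_zero εu) i) h := by
  induction h using AddMonoidAlgebra.induction_linear with
  | zero => simp
  | add f g hf hg =>
    rw [map_add, add_sub_add_comm]
    exact dvd_add hf hg
  | single m c =>
    rw [TW_single, powChi_apply]
    have hA : subA i j m = (m - m i • ee i) + m i • ee j := by
      show m + m i • (ee j - ee i) = _
      rw [smul_sub]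
      abel
    have hm : m = (m - m i • ee i) + m i • ee i := by abel
    have key : AddMonoidAlgebra.single m c
        - AddMonoidAlgebra.single (subA i j m) (c * (εu : k) ^ (m i))
        = AddMonoidAlgebra.single (m - m i • ee i) c
          * (AddMonoidAlgebra.single (m i • ee i) 1
            - AddMonoidAlgebra.single (m i • ee j) ((εu : k) ^ (m i))) := by
      rw [mul_sub, AddMonoidAlgebra.single_mul_single, AddMonoidAlgebra.single_mul_single,
        mul_one, hA, ← hm]
    rw [key]
    exact Dvd.dvd.mul_left (single_sub_dvd i j εu (m i)) _

lemma prod_dvd {ι : Type*} [DecidableEq ι] (d : ι → LL k n) (Φ : ι → (LL k n →ₐ[k] LL k n))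
    (hd : ∀ i h, Φ i h = 0 → d i ∣ h) (s : Finset ι) :
    ∀ (_ : ∀ i ∈ s, ∀ j ∈ s, i ≠ j → Φ i (d j) ≠ 0) (f : LL k n)
      (_ : ∀ i ∈ s, Φ i f = 0), (∏ i ∈ s, d i) ∣ f := by
  induction s using Finset.induction_on with
  | empty => intro _ f _; simp
  | @insert a s ha ih =>
    intro hne f hf
    obtain ⟨g, hg⟩ := hd a f (hf a (Finset.mem_insert_self a s))
    have hgs : ∀ i ∈ s, Φ i g = 0 := by
      intro i hi
      have h1 : Φ i f = Φ i (d a) * Φ i g := by rw [hg, map_mul]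
      have h2 := hf i (Finset.mem_insert_of_mem hi)
      rw [h1] at h2
      rcases mul_eq_zero.mp h2 with h3 | h3
      · exact absurd h3 (hne i (Finset.mem_insert_of_mem hi) a (Finset.mem_insert_self a s)
          (fun he => ha (he ▸ hi)))
      · exact h3
    have hne' : ∀ i ∈ s, ∀ j ∈ s, i ≠ j → Φ i (d j) ≠ 0 := fun i hi j hj =>
      hne i (Finset.mem_insert_of_mem hi) j (Finset.mem_insert_of_mem hj)
    rw [Finset.prod_insert ha, hg]
    exact mul_dvd_mul_left (d a) (ih hne' g hgs)

lemma subA_e (i j t : Fin n) : subA i j (ee t) = if t = i then ee j else ee t := by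
  funext x
  rw [subA_apply]
  rcases eq_or_ne t i with rfl | h
  · rw [if_pos rfl]
    have h1 : ee t t = 1 := Pi.single_eq_same t 1
    rw [h1]
    ring
  · rw [if_neg h]
    have h1 : ee t i = 0 := Pi.single_eq_of_ne (Ne.symm h) 1
    rw [h1]
    ring

lemma powChi_e (ε : k) (hε : ε ≠ 0) (i t : Fin n) :
    powChi ε hε i (Multiplicative.ofAdd (ee t)) = if t = i then ε else 1 := by
  rcases eq_or_ne t i with rfl | h
  · rw [powChi_apply, if_pos rfl]
    have h1 : ee t t = 1 := Pi.single_eq_same t 1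
    rw [h1, zpow_one]
  · rw [powChi_apply, if_neg h]
    have h1 : ee t i = 0 := Pi.single_eq_of_ne (Ne.symm h) 1
    rw [h1, zpow_zero]

lemma perm_prod {R : Type*} [CommRing R] {n : ℕ} (v : Fin n → R) (σ : Equiv.Perm (Fin n)) :
    ∏ i, ∏ j ∈ Ioi i, (v (σ i) - v (σ j))
      = ((Equiv.Perm.sign σ : ℤ) : R) * ∏ i, ∏ j ∈ Ioi i, (v i - v j) := by
  have flip : ∀ w : Fin n → R, ∏ i, ∏ j ∈ Ioi i, (w i - w j)
      = (∏ i : Fin n, ∏ _j ∈ Ioi i, (-1 : R)) * ∏ i, ∏ j ∈ Ioi i, (w j - w i) := by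
    intro w
    rw [← Finset.prod_mul_distrib]
    refine Finset.prod_congr rfl fun i _ => ?_
    rw [← Finset.prod_mul_distrib]
    exact Finset.prod_congr rfl fun j _ => by ring
  have hvdm : ∏ i, ∏ j ∈ Ioi i, (v (σ j) - v (σ i))
      = ((Matrix.vandermonde v).submatrix σ id).det := by
    rw [← Matrix.det_vandermonde (fun i => v (σ i))]
    rfl
  rw [flip (fun i => v (σ i)), flip v, hvdm, Matrix.det_permute, Matrix.det_vandermonde]
  push_cast
  ring

lemma comp_e (σ : Equiv.Perm (Fin n)) (i : Fin n) : (ee i) ∘ σ.symm = ee (σ i) := by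
  funext t
  show ee i (σ.symm t) = ee (σ i) t
  rw [ee_apply, ee_apply]
  congr 1
  rw [eq_iff_iff]
  constructor
  · intro h; rw [← h, Equiv.apply_symm_apply]
  · intro h; rw [h, Equiv.symm_apply_apply]

lemma permHom_e2 (σ : Equiv.Perm (Fin n)) (i : Fin n) :
    permHom σ (ee i + ee i) = ee (σ i) + ee (σ i) := by
  show (ee i + ee i) ∘ σ.symm = _
  funext t
  show (ee i + ee i) (σ.symm t) = _
  rw [Pi.add_apply]
  have h1 := congrFun (comp_e σ i) t
  rw [Function.comp_apply] at h1
  show ee i (σ.symm t) + ee i (σ.symm t) = ee (σ i) t + ee (σ i) t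
  rw [h1]

lemma permHom_negee (σ : Equiv.Perm (Fin n)) (i j : Fin n) :
    permHom σ (-(ee i) - ee j) = -(ee (σ i)) - ee (σ j) := by
  show (-(ee i) - ee j) ∘ σ.symm = _
  funext t
  show (-(ee i) - ee j) (σ.symm t) = _
  have hi := congrFun (comp_e σ i) t
  have hj := congrFun (comp_e σ j) t
  rw [Function.comp_apply] at hi hj
  show -(ee i (σ.symm t)) - ee j (σ.symm t) = -(ee (σ i) t) - ee (σ j) t
  rw [hi, hj]

lemma TW_V0 (σ : Equiv.Perm (Fin n)) (α : Fin n → ℤˣ) :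
    TW (permHom σ) (chiHom α) (V0 k n)
      = ((Equiv.Perm.sign σ : ℤ) : LL k n) * V0 k n := by
  rw [V0, map_prod]
  rw [Finset.prod_congr rfl fun i (_ : i ∈ Finset.univ) => map_prod _ _ (Ioi i)]
  have hfac : ∀ i j : Fin n, TW (permHom σ) (chiHom α)
      (AddMonoidAlgebra.single (ee i + ee i) (1 : k) - AddMonoidAlgebra.single (ee j + ee j) (1 : k))
      = (AddMonoidAlgebra.single (ee (σ i) + ee (σ i)) (1 : k)
        - AddMonoidAlgebra.single (ee (σ j) + ee (σ j)) (1 : k)) := by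
    intro i j
    rw [map_sub, TW_single, TW_single, chi_sq, chi_sq, mul_one,
      permHom_e2, permHom_e2]
  rw [Finset.prod_congr rfl fun i (_ : i ∈ Finset.univ) =>
    Finset.prod_congr rfl fun j (_ : j ∈ Ioi i) => hfac i j]
  have := perm_prod (fun i => (AddMonoidAlgebra.single (ee i + ee i) (1 : k) : LL k n)) σ
  rw [this]

lemma chi_sum {ι : Type*} (χ : Multiplicative (Fin n → ℤ) →* k) (s : Finset ι)
    (g : ι → (Fin n → ℤ)) :
    ∏ x ∈ s, χ (Multiplicative.ofAdd (g x)) = χ (Multiplicative.ofAdd (∑ x ∈ s, g x)) := by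
  induction s using Finset.cons_induction with
  | empty => simp
  | cons x s hx ih => rw [Finset.prod_cons, Finset.sum_cons, ih, ofAdd_add, map_mul]

lemma TW_Sprod (σ : Equiv.Perm (Fin n)) (α : Fin n → ℤˣ) (hα : ∏ i, α i = 1) (c : k) :
    TW (permHom σ) (chiHom α) (Sprod c) = Sprod c := by
  rw [Sprod, map_prod]
  rw [Finset.prod_congr rfl fun i (_ : i ∈ Finset.univ) => map_prod _ _ (Ioi i)]
  have hfac : ∀ i j : Fin n, TW (permHom σ) (chiHom α)
      (AddMonoidAlgebra.single (-(ee i) - ee j) c)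
      = AddMonoidAlgebra.single (0 : Fin n → ℤ) (chiHom α (Multiplicative.ofAdd (-(ee i) - ee j)))
        * AddMonoidAlgebra.single (-(ee (σ i)) - ee (σ j)) c := by
    intro i j
    rw [TW_single, permHom_negee, AddMonoidAlgebra.single_mul_single, zero_add, mul_comm]
  rw [Finset.prod_congr rfl fun i (_ : i ∈ Finset.univ) =>
    Finset.prod_congr rfl fun j (_ : j ∈ Ioi i) => hfac i j]
  rw [Finset.prod_congr rfl fun i (_ : i ∈ Finset.univ) => Finset.prod_mul_distrib,
    Finset.prod_mul_distrib]
  have h1 : (∏ i : Fin n, ∏ j ∈ Ioi i, AddMonoidAlgebra.single (0 : Fin n → ℤ)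
      (chiHom α (Multiplicative.ofAdd (-(ee i) - ee j))) : LL k n) = 1 := by
    rw [Finset.prod_congr rfl fun i (_ : i ∈ Finset.univ) =>
      prod_single (Ioi i) (fun _ => (0 : Fin n → ℤ)) _, prod_single]
    rw [Finset.prod_congr rfl fun i (_ : i ∈ Finset.univ) => chi_sum (chiHom α) (Ioi i) _,
      chi_sum (chiHom α) Finset.univ _]
    have hsp : (∑ i : Fin n, ∑ j ∈ Ioi i, (-(ee i) - ee j)) = (fun _ => (1 : ℤ) - n) := by
      have := sum_pairs (n := n) (Equiv.refl (Fin n))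
      simpa using this
    rw [hsp, chi_const α hα]
    simp [AddMonoidAlgebra.one_def]
  rw [h1, one_mul, Sprod_perm_eq σ c, ← Sprod_eq, Sprod]

lemma TW_qV (σ : Equiv.Perm (Fin n)) (α : Fin n → ℤˣ) (hα : ∏ i, α i = 1) (q : k) :
    TW (permHom σ) (chiHom α) (qVandermonde n q)
      = ((Equiv.Perm.sign σ : ℤ) : LL k n) * qVandermonde n q := by
  rw [qV_eq, map_mul, TW_Sprod σ α hα, TW_V0]
  ring

def alB (i j : Fin n) (b : Bool) : Fin n → ℤˣ :=
  if b then 1 else fun t => (if t = i then -1 else 1) * (if t = j then -1 else 1)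

lemma prod_ite_unit (i : Fin n) (u : ℤˣ) :
    ∏ t : Fin n, (if t = i then u else 1) = u := by
  rw [Finset.prod_ite_eq' Finset.univ i (fun _ => u), if_pos (Finset.mem_univ i)]

lemma alB_prod (i j : Fin n) (b : Bool) : ∏ t, alB i j b t = 1 := by
  cases b
  · rw [alB, if_neg (by simp), Finset.prod_mul_distrib, prod_ite_unit, prod_ite_unit]
    simp
  · simp [alB]

lemma chi_ind (i : Fin n) (m : Fin n → ℤ) :
    ∏ t : Fin n, (if t = i then (-1 : k) else 1) ^ (m t) = (-1 : k) ^ (m i) := by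
  have h : ∀ t : Fin n, (if t = i then (-1 : k) else 1) ^ (m t)
      = if t = i then (-1 : k) ^ (m t) else 1 := by
    intro t
    by_cases ht : t = i <;> simp [ht]
  rw [Finset.prod_congr rfl fun t _ => h t, Finset.prod_ite_eq' Finset.univ i,
    if_pos (Finset.mem_univ i)]

lemma chi_alB_false (i j : Fin n) (hij : i ≠ j) (m : Fin n → ℤ) :
    chiHom (alB i j false) (Multiplicative.ofAdd m) = (-1 : k) ^ (m i) * (-1 : k) ^ (m j) := by
  rw [chiHom_apply]
  have h : ∀ t : Fin n, ((((alB i j false) t : ℤ)) : k) ^ (m t)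
      = (if t = i then (-1 : k) else 1) ^ (m t) * (if t = j then (-1 : k) else 1) ^ (m t) := by
    intro t
    have halB : alB i j false t = (if t = i then -1 else 1) * (if t = j then -1 else 1) := by
      rw [alB, if_neg (by simp)]
    rw [halB]
    split_ifs with h1 h2 h2 <;> push_cast <;> simp_all [mul_zpow]
  rw [Finset.prod_congr rfl fun t _ => h t, Finset.prod_mul_distrib, chi_ind, chi_ind]

lemma swap_symm_apply (i j t : Fin n) : (Equiv.swap i j).symm t = Equiv.swap i j t := rfl

lemma permHom_swap_apply (i j : Fin n) (m : Fin n → ℤ) (t : Fin n) :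
    permHom (Equiv.swap i j) m t = m (Equiv.swap i j t) := rfl

lemma subA_swap (i j : Fin n) (hij : i ≠ j) (m : Fin n → ℤ) :
    subA i j (permHom (Equiv.swap i j) m) = subA i j m := by
  funext t
  rw [subA_apply, subA_apply, permHom_swap_apply, permHom_swap_apply,
    Equiv.swap_apply_left]
  have hji : ee j i = 0 := Pi.single_eq_of_ne hij 1
  have hii : ee i i = 1 := Pi.single_eq_same i 1
  rcases eq_or_ne t i with rfl | hti
  · rw [Equiv.swap_apply_left, hji, hii]
    ring
  · rcases eq_or_ne t j with rfl | htj
    · rw [Equiv.swap_apply_right]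
      have h1 : ee t t = 1 := Pi.single_eq_same t 1
      have h2 : ee i t = 0 := Pi.single_eq_of_ne (Ne.symm hij) 1
      rw [h1, h2]
      ring
    · rw [Equiv.swap_apply_of_ne_of_ne hti htj]
      have h1 : ee j t = 0 := Pi.single_eq_of_ne htj 1
      have h2 : ee i t = 0 := Pi.single_eq_of_ne hti 1
      rw [h1, h2]
      ring

def eck (k : Type*) [Field k] (b : Bool) : kˣ := if b then 1 else -1

noncomputable def PhiH (i j : Fin n) (b : Bool) : LL k n →ₐ[k] LL k n :=
  TW (subA i j) (powChi ((eck k b : kˣ) : k) (Units.ne_zero _) i)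

lemma neg_one_sq_zpow (z : ℤ) : (-1 : k) ^ z * (-1 : k) ^ z = 1 := by
  rw [← zpow_add₀ (neg_ne_zero.mpr (one_ne_zero : (1 : k) ≠ 0)), ← two_mul, zpow_mul]
  norm_num

lemma chi_comp_swap (i j : Fin n) (hij : i ≠ j) (b : Bool) (m : Fin n → ℤ) :
    chiHom (alB i j b) (Multiplicative.ofAdd m)
      * powChi ((eck k b : kˣ) : k) (Units.ne_zero _) i
          (Multiplicative.ofAdd (permHom (Equiv.swap i j) m))
      = powChi ((eck k b : kˣ) : k) (Units.ne_zero _) i (Multiplicative.ofAdd m) := by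
  have hval : permHom (Equiv.swap i j) m i = m j := by
    rw [permHom_swap_apply, Equiv.swap_apply_left]
  cases b
  · rw [powChi_apply, powChi_apply, hval, chi_alB_false i j hij]
    have he : ((eck k false : kˣ) : k) = -1 := by rw [eck]; simp
    rw [he, mul_assoc, neg_one_sq_zpow, mul_one]
  · have he : ((eck k true : kˣ) : k) = 1 := by rw [eck]; simp
    rw [powChi_apply, powChi_apply, he, one_zpow, one_zpow, mul_one]
    rw [chiHom_apply]
    have h : ∀ t : Fin n, (((alB i j true) t : ℤ) : k) ^ (m t) = 1 := by
      intro t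
      rw [alB, if_pos rfl]
      simp
    rw [Finset.prod_congr rfl fun t _ => h t, Finset.prod_const_one]

lemma Phi_zero [CharZero k] (i j : Fin n) (hij : i ≠ j) (b : Bool) (f : LL k n)
    (H : lact n (Equiv.swap i j) (alB i j b) f
      = ((Equiv.Perm.sign (Equiv.swap i j) : ℤ)) • f) :
    PhiH i j b f = 0 := by
  rw [lact_eq, Equiv.Perm.sign_swap hij] at H
  have Hneg : TW (permHom (Equiv.swap i j)) (chiHom (alB i j b)) f = -f := by
    rw [H]
    simp
  have hcomp := TW_comp_eq (permHom (Equiv.swap i j)) (subA i j) (chiHom (alB i j b))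
    (powChi ((eck k b : kˣ) : k) (Units.ne_zero _) i)
    (fun m => subA_swap i j hij m) (fun m => chi_comp_swap i j hij b m) f
  rw [Hneg, map_neg] at hcomp
  have h2 : PhiH i j b f + PhiH i j b f = 0 := by
    nth_rewrite 1 [PhiH, ← hcomp]
    rw [PhiH]
    abel
  have h3 : (2 : k) • PhiH i j b f = 0 := by
    rw [two_smul]
    exact h2
  rcases smul_eq_zero.mp h3 with h4 | h4
  · exact absurd h4 two_ne_zero
  · exact h4

lemma eck_ne (b : Bool) : ((eck k b : kˣ) : k) ≠ 0 := Units.ne_zero _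

lemma ee_ne_of_ne {a b : Fin n} (h : a ≠ b) : ee a ≠ ee b := fun hc => h (ee_inj hc)

lemma Phi_d_ne' [CharZero k] (i j i' j' : Fin n) (b b' : Bool) (hij : i < j) (hij' : i' < j')
    (hd : ¬(i = i' ∧ j = j' ∧ b = b')) :
    PhiH i j b (AddMonoidAlgebra.single (ee i') 1
      - AddMonoidAlgebra.single (ee j') ((eck k b' : kˣ) : k)) ≠ 0 := by
  have hijne : i ≠ j := ne_of_lt hij
  rw [PhiH, map_sub, TW_single, TW_single, subA_e, subA_e, powChi_e, powChi_e, one_mul]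
  by_cases h1 : i' = i
  · rw [if_pos h1, if_pos h1]
    have hj'i : j' ≠ i := fun hc => absurd (by rw [h1, hc] at hij'; exact hij' : i < i) (lt_irrefl i)
    rw [if_neg hj'i, if_neg hj'i]
    by_cases h2 : j' = j
    · have hbb' : b ≠ b' := fun hc => hd ⟨h1.symm, h2.symm, hc⟩
      rw [h2, ← AddMonoidAlgebra.single_sub]
      intro hz
      have hz2 := AddMonoidAlgebra.single_eq_zero.mp hz
      rcases Bool.eq_false_or_eq_true b with hb | hb <;>
        rcases Bool.eq_false_or_eq_true b' with hb' | hb' <;>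
          simp only [hb, hb', eck] at hz2 hbb' <;> simp at hz2 hbb' <;> norm_num at hz2
    · exact sub_single_ne _ _ _ _ (ee_ne_of_ne (Ne.symm h2)) (eck_ne b)
  · rw [if_neg h1, if_neg h1]
    by_cases h3 : j' = i
    · rw [if_pos h3, if_pos h3]
      have hi'j : i' ≠ j := ne_of_lt (lt_trans (h3 ▸ hij') hij)
      exact sub_single_ne _ _ _ _ (ee_ne_of_ne hi'j) one_ne_zero
    · rw [if_neg h3, if_neg h3]
      exact sub_single_ne _ _ _ _ (ee_ne_of_ne (ne_of_lt hij')) one_ne_zero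

lemma prod_dP :
    ∏ p ∈ (((Finset.univ : Finset (Fin n)).sigma fun i => Ioi i)
        ×ˢ (Finset.univ : Finset Bool)),
      (AddMonoidAlgebra.single (ee p.1.1) 1
        - AddMonoidAlgebra.single (ee p.1.2) ((eck k p.2 : kˣ) : k) : LL k n)
      = V0 k n := by
  rw [Finset.prod_product, Finset.prod_sigma, V0]
  refine Finset.prod_congr rfl fun i _ => Finset.prod_congr rfl fun j _ => ?_
  rw [Fintype.prod_bool]
  have ht : ((eck k true : kˣ) : k) = 1 := by rw [eck]; simp
  have hf : ((eck k false : kˣ) : k) = -1 := by rw [eck]; simp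
  rw [ht, hf]
  have hB : (AddMonoidAlgebra.single (ee j) (-1 : k) : LL k n)
      = -AddMonoidAlgebra.single (ee j) 1 := by
    rw [← AddMonoidAlgebra.single_neg]
  rw [hB, sub_neg_eq_add]
  have hring : (AddMonoidAlgebra.single (ee i) 1 - AddMonoidAlgebra.single (ee j) (1 : k))
      * (AddMonoidAlgebra.single (ee i) 1 + AddMonoidAlgebra.single (ee j) 1)
      = AddMonoidAlgebra.single (ee i) 1 * AddMonoidAlgebra.single (ee i) (1 : k)
        - AddMonoidAlgebra.single (ee j) 1 * AddMonoidAlgebra.single (ee j) 1 := by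
    ring
  rw [hring, AddMonoidAlgebra.single_mul_single, AddMonoidAlgebra.single_mul_single, mul_one]

lemma V0_dvd [CharZero k] (f : LL k n)
    (H : ∀ (σ : Equiv.Perm (Fin n)) (α : Fin n → ℤˣ), (∏ i, α i) = 1 →
      lact n σ α f = ((Equiv.Perm.sign σ : ℤ)) • f) :
    V0 k n ∣ f := by
  classical
  set PS := (((Finset.univ : Finset (Fin n)).sigma fun i => Ioi i)
    ×ˢ (Finset.univ : Finset Bool)) with hPS
  have key := prod_dvd
    (fun p => (AddMonoidAlgebra.single (ee p.1.1) 1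
      - AddMonoidAlgebra.single (ee p.1.2) ((eck k p.2 : kˣ) : k) : LL k n))
    (fun p => PhiH p.1.1 p.1.2 p.2)
    (fun p h hz => by
      have hdvd := dvd_sub_TW p.1.1 p.1.2 (eck k p.2) h
      rw [show TW (subA p.1.1 p.1.2) (powChi ((eck k p.2 : kˣ) : k)
        (Units.ne_zero _) p.1.1) h = PhiH p.1.1 p.1.2 p.2 h from rfl, hz, sub_zero] at hdvd
      exact hdvd)
    PS
    (fun p hp p' hp' hne => by
      rw [hPS, Finset.mem_product, Finset.mem_sigma] at hp hp'
      refine Phi_d_ne' p.1.1 p.1.2 p'.1.1 p'.1.2 p.2 p'.2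
        (Finset.mem_Ioi.mp hp.1.2) (Finset.mem_Ioi.mp hp'.1.2) ?_
      rintro ⟨e1, e2, e3⟩
      exact hne (by
        rcases p with ⟨⟨a, c⟩, b⟩
        rcases p' with ⟨⟨a', c'⟩, b'⟩
        simp only at e1 e2 e3
        subst e1; subst e2; subst e3
        rfl))
    f
    (fun p hp => by
      rw [hPS, Finset.mem_product, Finset.mem_sigma] at hp
      have hij : p.1.1 ≠ p.1.2 := ne_of_lt (Finset.mem_Ioi.mp hp.1.2)
      exact Phi_zero p.1.1 p.1.2 hij p.2 f
        (H (Equiv.swap p.1.1 p.1.2) (alB p.1.1 p.1.2 p.2) (alB_prod p.1.1 p.1.2 p.2)))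
  rw [hPS, prod_dP] at key
  exact key

end Stmt17Aux

/-- Let `Λ = k[x₁^{±1},…,xₙ^{±1}]` with `G = G(2,2,n)` acting by `g(xᵢ) = αᵢ x_{σ(i)}`
(`∏αᵢ = 1`), over an algebraically closed field `k` of characteristic zero, and `q ∈ k`
nonzero and not a root of unity.  Then a Laurent polynomial `f` is `sgn`-relative invariant
iff `f = g·𝒱_q` with `g` a `G`-invariant; i.e. `Λ^G_{sgn} = Λ^G·𝒱_q`. -/
theorem stmt17 (k : Type*) [Field k] [CharZero k] [IsAlgClosed k] (n : ℕ)
    (q : k) (hq : q ≠ 0) (hroot : ∀ m : ℕ, 0 < m → q ^ m ≠ 1)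
    (f : AddMonoidAlgebra k (Fin n → ℤ)) :
    (∀ (σ : Equiv.Perm (Fin n)) (α : Fin n → ℤˣ), (∏ i, α i) = 1 →
        lact n σ α f = (Equiv.Perm.sign σ : ℤ) • f)
      ↔ ∃ g : AddMonoidAlgebra k (Fin n → ℤ),
          (∀ (σ : Equiv.Perm (Fin n)) (α : Fin n → ℤˣ), (∏ i, α i) = 1 →
            lact n σ α g = g) ∧
          f = g * qVandermonde n q := by
  have hqq : q - q⁻¹ ≠ 0 := by
    intro h0
    have hq2 : q ^ 2 = 1 := by
      have heq : q = q⁻¹ := sub_eq_zero.mp h0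
      calc q ^ 2 = q * q := sq q
        _ = q * q⁻¹ := by rw [← heq]
        _ = 1 := mul_inv_cancel₀ hq
    exact hroot 2 (by norm_num) hq2
  have hcne : ((q - q⁻¹)⁻¹ : k) ≠ 0 := inv_ne_zero hqq
  have hκne : (∏ i : Fin n, ∏ _j ∈ Finset.Ioi i, ((q - q⁻¹)⁻¹ : k)) ≠ 0 :=
    Finset.prod_ne_zero_iff.mpr fun i _ => Finset.prod_ne_zero_iff.mpr fun _ _ => hcne
  have hqVne : qVandermonde n q ≠ 0 := by
    rw [qV_eq, Sprod_eq]
    exact mul_ne_zero (fun hz => hκne (AddMonoidAlgebra.single_eq_zero.mp hz)) V0_ne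
  constructor
  · intro H
    obtain ⟨h, hh⟩ := V0_dvd f H
    set κ := ∏ i : Fin n, ∏ _j ∈ Finset.Ioi i, ((q - q⁻¹)⁻¹ : k) with hκ
    set g := (AddMonoidAlgebra.single (fun _ : Fin n => (n : ℤ) - 1) κ⁻¹ : LL k n) * h
      with hgdef
    have hmul : (AddMonoidAlgebra.single (fun _ : Fin n => (n : ℤ) - 1) κ⁻¹ : LL k n)
        * AddMonoidAlgebra.single (fun _ => (1 : ℤ) - n) κ = 1 := by
      rw [AddMonoidAlgebra.single_mul_single, inv_mul_cancel₀ hκne]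
      have hexp : ((fun _ : Fin n => (n : ℤ) - 1) + fun _ => (1 : ℤ) - n) = 0 := by
        funext t
        show ((n : ℤ) - 1) + ((1 : ℤ) - n) = 0
        ring
      rw [hexp]
      rfl
    have hfg : f = g * qVandermonde n q := by
      rw [qV_eq, Sprod_eq, ← hκ]
      have hrng : g * (AddMonoidAlgebra.single (fun _ => (1 : ℤ) - (n : ℤ)) κ * V0 k n)
          = ((AddMonoidAlgebra.single (fun _ : Fin n => (n : ℤ) - 1) κ⁻¹ : LL k n)
            * AddMonoidAlgebra.single (fun _ => (1 : ℤ) - n) κ) * (h * V0 k n) := by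
        rw [hgdef]
        ring
      rw [hrng, hmul, one_mul, hh]
      ring
    refine ⟨g, ?_, hfg⟩
    intro σ α hα
    have h1 := H σ α hα
    rw [lact_eq, hfg, map_mul, TW_qV σ α hα q, zsmul_eq_mul] at h1
    rw [lact_eq]
    have hcan : TW (permHom σ) (chiHom α) g * qVandermonde n q = g * qVandermonde n q := by
      rcases Int.units_eq_one_or (Equiv.Perm.sign σ) with hs | hs <;> rw [hs] at h1
      · simpa using h1
      · have hm1 : (((-1 : ℤˣ) : ℤ) : LL k n) = -1 := by push_cast; rfl
        rw [hm1] at h1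
        have h2 : -(TW (permHom σ) (chiHom α) g * qVandermonde n q)
            = -(g * qVandermonde n q) := by
          linear_combination h1
        exact neg_inj.mp h2
    exact mul_right_cancel₀ hqVne hcan
  · rintro ⟨g, hg, hfg⟩ σ α hα
    rw [hfg, lact_eq, map_mul, ← lact_eq, hg σ α hα, TW_qV σ α hα q, zsmul_eq_mul]
    ring
end
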